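/- Let κ : ℝ → ℝ be continuous with κ(s) ≤ K < 0 for all s ≥ 0 and some constant K. Then the function Λ(τ) := ∫_τ^∞ exp(∫_τ^ρ κ(s) ds) dρ is finite for all τ, satisfies Λ(τ) ≤ 1/(-K), and is differentiable with Λ'(τ) = -1 - κ(τ)Λ(τ). -/

import Mathlib

open MeasureTheory Filter

theorem affine_length_finite_bounded_differentiable
    (κ : ℝ → ℝ) (K : ℝ) (hK : K < 0) (hcont : Continuous κ)
    (hbd : ∀ s, κ s ≤ K) :
    ∀ τ : ℝ,
      IntegrableOn (fun ρ => Real.exp (∫ s in τ..ρ, κ s)) (Set.Ioi τ) ∧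
      (∫ ρ in Set.Ioi τ, Real.exp (∫ s in τ..ρ, κ s)) ≤ 1 / (-K) ∧
      HasDerivAt (fun τ' => ∫ ρ in Set.Ioi τ', Real.exp (∫ s in τ'..ρ, κ s))
        (-1 - κ τ * (∫ ρ in Set.Ioi τ, Real.exp (∫ s in τ..ρ, κ s))) τ := by
  have hκint : ∀ a b : ℝ, IntervalIntegrable κ volume a b := fun a b =>
    hcont.intervalIntegrable a b
  set F : ℝ → ℝ := fun t => ∫ s in (0:ℝ)..t, κ s with hF
  set g : ℝ → ℝ := fun ρ => Real.exp (F ρ) with hg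
  have hgcont : Continuous g := by
    apply Real.continuous_exp.comp
    exact intervalIntegral.continuous_primitive hκint 0
  -- splitting of the interval integral
  have hsplit : ∀ τ ρ : ℝ, (∫ s in τ..ρ, κ s) = F ρ - F τ := by
    intro τ ρ
    have := intervalIntegral.integral_add_adjacent_intervals (hκint τ 0) (hκint 0 ρ)
    have h2 : (∫ s in τ..(0:ℝ), κ s) = - F τ := intervalIntegral.integral_symm 0 τ
    rw [h2] at this
    linarith [this]
  have hrepr : ∀ τ ρ : ℝ, Real.exp (∫ s in τ..ρ, κ s) = Real.exp (-F τ) * g ρ := by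
    intro τ ρ
    rw [hsplit, sub_eq_neg_add, Real.exp_add]
  -- bound on F
  have hFbd : ∀ a ρ : ℝ, a ≤ ρ → F ρ - F a ≤ K * (ρ - a) := by
    intro a ρ h
    have : (∫ s in a..ρ, κ s) ≤ ∫ s in a..ρ, K := by
      apply intervalIntegral.integral_mono_on h (hκint a ρ)
        (intervalIntegrable_const) (fun x _ => hbd x)
    rw [intervalIntegral.integral_const, smul_eq_mul, mul_comm] at this
    have hs := hsplit a ρ
    linarith
  -- integrability of the exponential comparison function
  have hexpint : ∀ a : ℝ, IntegrableOn (fun ρ => Real.exp (K * (ρ - a))) (Set.Ioi a) := by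
    intro a
    have h0 : (0:ℝ) < -K := by linarith
    have h1 : IntegrableOn (fun x : ℝ => Real.exp (-(-K) * x)) (Set.Ioi a) :=
      exp_neg_integrableOn_Ioi a h0
    have h2 := h1.mul_const (Real.exp (-(K * a)))
    apply MeasureTheory.IntegrableOn.congr_fun h2 _ measurableSet_Ioi
    intro x _
    simp only [← Real.exp_add]
    ring_nf
  have hgint : ∀ a : ℝ, IntegrableOn g (Set.Ioi a) := by
    intro a
    have hdom : IntegrableOn (fun ρ => Real.exp (F a) * Real.exp (K * (ρ - a))) (Set.Ioi a) :=
      (hexpint a).const_mul _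
    apply Integrable.mono' hdom (hgcont.aestronglyMeasurable.restrict)
    filter_upwards [ae_restrict_mem measurableSet_Ioi] with ρ hρ
    rw [Real.norm_eq_abs, abs_of_pos (Real.exp_pos _), ← Real.exp_add]
    apply Real.exp_le_exp.2
    have := hFbd a ρ (le_of_lt hρ)
    linarith
  have hGint : ∀ τ : ℝ, IntegrableOn (fun ρ => Real.exp (∫ s in τ..ρ, κ s)) (Set.Ioi τ) := by
    intro τ
    have := ((hgint τ).const_mul (Real.exp (-F τ)))
    apply MeasureTheory.IntegrableOn.congr_fun this _ measurableSet_Ioi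
    intro x _
    exact (hrepr τ x).symm
  -- value of the comparison integral
  have hexpval : ∀ a : ℝ, (∫ ρ in Set.Ioi a, Real.exp (K * (ρ - a))) = 1 / (-K) := by
    intro a
    have h := integral_Ioi_of_hasDerivAt_of_tendsto'
      (f := fun ρ => Real.exp (K * (ρ - a)) / K)
      (f' := fun ρ => Real.exp (K * (ρ - a))) (a := a) (m := 0)
      ?_ (hexpint a) ?_
    · rw [h]; simp only [sub_self, mul_zero, Real.exp_zero]
      field_simp
      ring
    · intro x _
      have hd : HasDerivAt (fun ρ => K * (ρ - a)) K x := by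
        simpa using ((hasDerivAt_id x).sub_const a).const_mul K
      have := (hd.exp).div_const K
      simpa [mul_div_assoc, mul_comm, hK.ne] using this
    · have h1 : Tendsto (fun ρ : ℝ => K * (ρ - a)) atTop atBot := by
        apply (Filter.tendsto_const_mul_atBot_of_neg hK).2
        exact tendsto_atTop_add_const_right atTop (-a) tendsto_id
      have h2 : Tendsto (fun ρ : ℝ => Real.exp (K * (ρ - a))) atTop (nhds 0) :=
        Real.tendsto_exp_atBot.comp h1
      simpa using h2.div_const K
  -- the bound
  have hbound : ∀ τ : ℝ, (∫ ρ in Set.Ioi τ, Real.exp (∫ s in τ..ρ, κ s)) ≤ 1 / (-K) := by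
    intro τ
    rw [← hexpval τ]
    apply setIntegral_mono_on (hGint τ) (hexpint τ) measurableSet_Ioi
    intro ρ hρ
    apply Real.exp_le_exp.2
    have := hFbd τ ρ (le_of_lt hρ)
    have hs := hsplit τ ρ
    linarith
  -- G and its representation
  set G : ℝ → ℝ := fun t => ∫ ρ in Set.Ioi t, g ρ with hG
  have hGrepr : ∀ t : ℝ, G t = G 0 - ∫ x in (0:ℝ)..t, g x := by
    intro t
    have key : ∀ a b : ℝ, a ≤ b → (∫ ρ in Set.Ioi a, g ρ) =
        (∫ ρ in Set.Ioc a b, g ρ) + ∫ ρ in Set.Ioi b, g ρ := by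
      intro a b hab
      rw [← Set.Ioc_union_Ioi_eq_Ioi hab]
      rw [setIntegral_union (Set.Ioc_disjoint_Ioi le_rfl) measurableSet_Ioi
        ((hgint a).mono_set Set.Ioc_subset_Ioi_self) (hgint b)]
    rcases le_total 0 t with h | h
    · have := key 0 t h
      rw [intervalIntegral.integral_of_le h]
      simp only [hG]
      rw [this]; ring
    · have := key t 0 h
      rw [intervalIntegral.integral_symm, intervalIntegral.integral_of_le h]
      simp only [hG]
      rw [this]; ring
  -- derivatives
  intro τ
  have hFderiv : HasDerivAt F (κ τ) τ :=
    intervalIntegral.integral_hasDerivAt_right (hκint 0 τ)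
      hcont.stronglyMeasurable.stronglyMeasurableAtFilter hcont.continuousAt
  have hIderiv : HasDerivAt (fun t => ∫ x in (0:ℝ)..t, g x) (g τ) τ :=
    intervalIntegral.integral_hasDerivAt_right (hgcont.intervalIntegrable 0 τ)
      hgcont.stronglyMeasurable.stronglyMeasurableAtFilter hgcont.continuousAt
  have hGderiv : HasDerivAt G (-(g τ)) τ := by
    have : HasDerivAt (fun t => G 0 - ∫ x in (0:ℝ)..t, g x) (-(g τ)) τ := by
      have h := (hasDerivAt_const τ (G 0)).sub hIderiv
      rw [zero_sub] at h
      exact h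
    exact this.congr_of_eventuallyEq (Filter.Eventually.of_forall hGrepr)
  have hEderiv : HasDerivAt (fun t => Real.exp (-F t)) (-(κ τ) * Real.exp (-F τ)) τ := by
    have := (hFderiv.neg).exp
    simpa [mul_comm] using this
  have hprod : HasDerivAt (fun t => Real.exp (-F t) * G t)
      ((-(κ τ) * Real.exp (-F τ)) * G τ + Real.exp (-F τ) * (-(g τ))) τ :=
    hEderiv.mul hGderiv
  have hfuneq : (fun τ' => ∫ ρ in Set.Ioi τ', Real.exp (∫ s in τ'..ρ, κ s)) =
      fun t => Real.exp (-F t) * G t := by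
    funext t
    simp only [hG]
    rw [← integral_const_mul]
    apply setIntegral_congr_fun measurableSet_Ioi
    intro x _
    exact hrepr t x
  have hΛval : (∫ ρ in Set.Ioi τ, Real.exp (∫ s in τ..ρ, κ s)) = Real.exp (-F τ) * G τ := by
    have := congrFun hfuneq τ
    simpa using this
  refine ⟨hGint τ, hbound τ, ?_⟩
  rw [hfuneq, hΛval]
  have hval : (-(κ τ) * Real.exp (-F τ)) * G τ + Real.exp (-F τ) * (-(g τ))
      = -1 - κ τ * (Real.exp (-F τ) * G τ) := by
    have : Real.exp (-F τ) * g τ = 1 := by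
      rw [hg, ← Real.exp_add]; simp
    nlinarith [this]
  rw [← hval]
  exact hprod
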